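/- Stieltjes self-integral identity (used in Lemma 5.6): Let g, h : [0,∞) → ℝ be continuous nondecreasing functions with g(0) = h(0), and let μ_g, μ_h denote their Lebesgue–Stieltjes measures. Then for every t ≥ 0, ∫_{(0,t]} (h(s) − g(s)) dμ_g(s) − ∫_{(0,t]} (h(s) − g(s)) dμ_h(s) = −(g(t) − h(t))²/2. -/

import Mathlib

open MeasureTheory Set Filter Topology
open scoped ENNReal

lemma leftLim_eq_self_of_continuous (g : StieltjesFunction ℝ)
    (hg : Continuous fun x => g x) (x : ℝ) : Function.leftLim (fun y => g y) x = g x := by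
  apply leftLim_eq_of_tendsto
  exact (hg.tendsto x).mono_left nhdsWithin_le_nhds

lemma measure_Icc_of_continuous (g : StieltjesFunction ℝ)
    (hg : Continuous fun x => g x) (a b : ℝ) :
    g.measure (Icc a b) = ENNReal.ofReal (g b - g a) := by
  rw [StieltjesFunction.measure_Icc, leftLim_eq_self_of_continuous g hg]

/-- Key swap identity via Tonelli. -/
lemma aux_swap (g h : StieltjesFunction ℝ)
    (hg : Continuous fun x => g x) (hh : Continuous fun x => h x) (t : ℝ) :
    (∫⁻ s in Ioc (0:ℝ) t, h.measure (Ioc 0 s) ∂g.measure)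
      + (∫⁻ s in Ioc (0:ℝ) t, g.measure (Ioc 0 s) ∂h.measure)
    = g.measure (Ioc 0 t) * h.measure (Ioc 0 t) := by
  set I : Set ℝ := Ioc (0:ℝ) t with hI
  set μ := g.measure.restrict I
  set ν := h.measure.restrict I
  have hmeas : Measurable (Function.uncurry fun (s u : ℝ) => if u ≤ s then (1:ℝ≥0∞) else 0) := by
    apply Measurable.ite (measurableSet_le measurable_snd measurable_fst) <;> exact measurable_const
  have key : (∫⁻ s, ∫⁻ u, (if u ≤ s then (1:ℝ≥0∞) else 0) ∂ν ∂μ)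
      = ∫⁻ u, ∫⁻ s, (if u ≤ s then (1:ℝ≥0∞) else 0) ∂μ ∂ν :=
    lintegral_lintegral_swap hmeas.aemeasurable
  have inner1 : ∀ s ∈ I, (∫⁻ u, (if u ≤ s then (1:ℝ≥0∞) else 0) ∂ν) = h.measure (Ioc 0 s) := by
    intro s hs
    have : (fun u => if u ≤ s then (1:ℝ≥0∞) else 0) = (Iic s).indicator fun _ => 1 := by
      funext u; simp [Set.indicator_apply]
    rw [this, lintegral_indicator measurableSet_Iic, setLIntegral_one]
    show h.measure.restrict I (Iic s) = _
    rw [Measure.restrict_apply measurableSet_Iic, hI]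
    congr 1
    ext u
    simp only [mem_inter_iff, mem_Iic, mem_Ioc]
    exact ⟨fun ⟨h1, h2, h3⟩ => ⟨h2, h1⟩, fun ⟨h1, h2⟩ => ⟨h2, h1, h2.trans hs.2⟩⟩
  have inner2 : ∀ u ∈ I, (∫⁻ s, (if u ≤ s then (1:ℝ≥0∞) else 0) ∂μ)
      = ENNReal.ofReal (g t - g u) := by
    intro u hu
    have : (fun s => if u ≤ s then (1:ℝ≥0∞) else 0) = (Ici u).indicator fun _ => 1 := by
      funext s; simp [Set.indicator_apply]
    rw [this, lintegral_indicator measurableSet_Ici, setLIntegral_one]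
    show g.measure.restrict I (Ici u) = _
    rw [Measure.restrict_apply measurableSet_Ici, hI]
    have : Ici u ∩ Ioc 0 t = Icc u t := by
      ext s
      simp only [mem_inter_iff, mem_Ici, mem_Ioc, mem_Icc]
      exact ⟨fun ⟨h1, h2, h3⟩ => ⟨h1, h3⟩, fun ⟨h1, h2⟩ => ⟨h1, hu.1.trans_le h1, h2⟩⟩
    rw [this, measure_Icc_of_continuous g hg]
  have L1 : (∫⁻ s in I, h.measure (Ioc 0 s) ∂g.measure)
      = ∫⁻ u in I, ENNReal.ofReal (g t - g u) ∂h.measure := by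
    calc (∫⁻ s in I, h.measure (Ioc 0 s) ∂g.measure)
        = ∫⁻ s, ∫⁻ u, (if u ≤ s then (1:ℝ≥0∞) else 0) ∂ν ∂μ := by
          refine (setLIntegral_congr_fun measurableSet_Ioc ?_).symm
          exact inner1
      _ = ∫⁻ u, ∫⁻ s, (if u ≤ s then (1:ℝ≥0∞) else 0) ∂μ ∂ν := key
      _ = ∫⁻ u in I, ENNReal.ofReal (g t - g u) ∂h.measure :=
          setLIntegral_congr_fun measurableSet_Ioc inner2
  rw [L1, ← lintegral_add_left]
  · have : ∀ u ∈ I, ENNReal.ofReal (g t - g u) + g.measure (Ioc 0 u)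
        = ENNReal.ofReal (g t - g 0) := by
      intro u hu
      rw [StieltjesFunction.measure_Ioc, ← ENNReal.ofReal_add
        (by linarith [g.mono hu.2] : (0:ℝ) ≤ g t - g u)
        (by linarith [g.mono hu.1.le] : (0:ℝ) ≤ g u - g 0)]
      ring_nf
    rw [setLIntegral_congr_fun measurableSet_Ioc this,
      setLIntegral_const, StieltjesFunction.measure_Ioc]
    simp only [hI, StieltjesFunction.measure_Ioc]
  · exact (ENNReal.measurable_ofReal.comp (measurable_const.sub g.mono.measurable))

theorem stieltjes_self_integral_identity
    (g h : StieltjesFunction ℝ)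
    (hg : Continuous fun x => g x) (hh : Continuous fun x => h x)
    (h0 : g 0 = h 0) :
    ∀ t ≥ (0 : ℝ),
      (∫ s in Ioc (0 : ℝ) t, (h s - g s) ∂g.measure)
        - (∫ s in Ioc (0 : ℝ) t, (h s - g s) ∂h.measure)
      = -(g t - h t) ^ 2 / 2 := by
  intro t ht
  set I : Set ℝ := Ioc (0:ℝ) t with hI
  -- finiteness helper
  have fin : ∀ (f k : StieltjesFunction ℝ),
      (∫⁻ s in I, k.measure (Ioc 0 s) ∂f.measure) ≠ ⊤ := by
    intro f k
    have hb : (∫⁻ s in I, k.measure (Ioc 0 s) ∂f.measure)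
        ≤ ENNReal.ofReal (k t - k 0) * f.measure I := by
      rw [← setLIntegral_const]
      refine setLIntegral_mono' measurableSet_Ioc fun s hs => ?_
      rw [StieltjesFunction.measure_Ioc]
      exact ENNReal.ofReal_le_ofReal (by linarith [k.mono hs.2])
    refine (hb.trans_lt (ENNReal.mul_lt_top ?_ ?_)).ne
    · exact ENNReal.ofReal_lt_top
    · rw [hI, StieltjesFunction.measure_Ioc]; exact ENNReal.ofReal_lt_top
  -- expressing Bochner integrals as lintegrals
  have conv : ∀ (f k : StieltjesFunction ℝ), Continuous (fun x => k x) →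
      (∫ s in I, (k s - k 0) ∂f.measure)
        = (∫⁻ s in I, k.measure (Ioc 0 s) ∂f.measure).toReal := by
    intro f k hk
    rw [integral_eq_lintegral_of_nonneg_ae]
    · congr 1
      refine setLIntegral_congr_fun measurableSet_Ioc ?_
      intro s hs
      simp only [StieltjesFunction.measure_Ioc]
    · refine ae_restrict_of_forall_mem measurableSet_Ioc fun s hs => ?_
      simp only [Pi.zero_apply]
      linarith [k.mono hs.1.le]
    · exact ((hk.sub continuous_const).aestronglyMeasurable).restrict
  -- integrability
  have intg : ∀ (f k : StieltjesFunction ℝ), Continuous (fun x => k x) →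
      IntegrableOn (fun s => k s - k 0) I f.measure := by
    intro f k hk
    exact (hk.sub continuous_const).integrableOn_Ioc
  -- split the integrand
  have split : ∀ (f : StieltjesFunction ℝ),
      (∫ s in I, (h s - g s) ∂f.measure)
        = (∫ s in I, (h s - h 0) ∂f.measure) - (∫ s in I, (g s - g 0) ∂f.measure) := by
    intro f
    rw [← integral_sub (intg f h hh) (intg f g hg)]
    refine setIntegral_congr_fun measurableSet_Ioc fun s hs => ?_
    rw [h0]; ring
  rw [split g, split h, conv g h hh, conv g g hg, conv h h hh, conv h g hg]
  -- real versions of the swap identities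
  have hg0t : g 0 ≤ g t := g.mono ht
  have hh0t : h 0 ≤ h t := h.mono ht
  have swap_gh := aux_swap g h hg hh t
  have swap_gg := aux_swap g g hg hg t
  have swap_hh := aux_swap h h hh hh t
  have toR : ∀ (f₁ k₁ f₂ k₂ : StieltjesFunction ℝ) (a b : ℝ), 0 ≤ a → 0 ≤ b →
      (∫⁻ s in I, k₁.measure (Ioc 0 s) ∂f₁.measure)
        + (∫⁻ s in I, k₂.measure (Ioc 0 s) ∂f₂.measure)
        = ENNReal.ofReal a * ENNReal.ofReal b →
      (∫⁻ s in I, k₁.measure (Ioc 0 s) ∂f₁.measure).toReal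
        + (∫⁻ s in I, k₂.measure (Ioc 0 s) ∂f₂.measure).toReal = a * b := by
    intro f₁ k₁ f₂ k₂ a b ha hb heq
    rw [← ENNReal.toReal_add (fin f₁ k₁) (fin f₂ k₂), heq, ENNReal.toReal_mul,
      ENNReal.toReal_ofReal ha, ENNReal.toReal_ofReal hb]
  rw [g.measure_Ioc 0 t, h.measure_Ioc 0 t] at swap_gh
  rw [g.measure_Ioc 0 t] at swap_gg
  rw [h.measure_Ioc 0 t] at swap_hh
  have e1 := toR g h h g (g t - g 0) (h t - h 0) (by linarith) (by linarith) swap_gh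
  have e2 := toR g g g g (g t - g 0) (g t - g 0) (by linarith) (by linarith) swap_gg
  have e3 := toR h h h h (h t - h 0) (h t - h 0) (by linarith) (by linarith) swap_hh
  nlinarith [e1, e2, e3, h0]
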